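/- Let (A,d) be a connected dga with a weight ω, and let a ∈ A be a cocycle. If ω detects a, i.e. a is ω-homogeneous with ω(a) ≠ 0, then the class [a] ∈ H(A,d) is flexible: for every n ∈ ℤ there exists a dga endomorphism f_n of (A,d) such that H(f_n)([a]) = λ·[a] for some rational number λ ≥ n. -/

import Mathlib

/-- A graded-commutative, associative, unital `ℚ`-algebra with an `ℕ`-grading. -/
structure GradedCommAlg where
  carrier : Type
  [ring : Ring carrier]
  [algebra : Algebra ℚ carrier]
  grading : ℕ → Submodule ℚ carrier
  internal : DirectSum.IsInternal grading
  one_mem : (1 : carrier) ∈ grading 0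
  mul_mem : ∀ {i j : ℕ} {x y : carrier}, x ∈ grading i → y ∈ grading j → x * y ∈ grading (i + j)
  gcomm : ∀ {i j : ℕ} {x y : carrier}, x ∈ grading i → y ∈ grading j →
      x * y = ((-1 : ℚ) ^ (i * j)) • (y * x)

attribute [instance] GradedCommAlg.ring GradedCommAlg.algebra

/-- A connected differential graded algebra (dga) over `ℚ`. -/
structure ConnectedDGA extends GradedCommAlg where
  connected : ∀ x ∈ grading 0, ∃ q : ℚ, x = q • (1 : carrier)
  d : carrier →ₗ[ℚ] carrier
  d_deg : ∀ {k : ℕ} {x : carrier}, x ∈ grading k → d x ∈ grading (k + 1)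
  d_sq : ∀ x, d (d x) = 0
  leibniz : ∀ {i : ℕ} {x y : carrier}, x ∈ grading i →
      d (x * y) = d x * y + ((-1 : ℚ) ^ i) • (x * d y)

namespace ConnectedDGA

/-- `x` is a coboundary, i.e. represents `0` in cohomology. -/
def IsCoboundary (A : ConnectedDGA) (x : A.carrier) : Prop := ∃ y, A.d y = x

/-- The (two-sided, by graded-commutativity) ideal generated by a set `S`. -/
def mulIdeal (A : ConnectedDGA) (S : Set A.carrier) : Submodule ℚ A.carrier :=
  Submodule.span ℚ {x : A.carrier | ∃ r : A.carrier, ∃ s ∈ S, x = r * s}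

end ConnectedDGA

/-- A weight on a connected dga: a bigraded decomposition compatible with `d` and products. -/
structure Weight (A : ConnectedDGA) where
  w : ℕ → ℤ → Submodule ℚ A.carrier
  internal : DirectSum.IsInternal (fun p : ℕ × ℤ => w p.1 p.2)
  grading_eq : ∀ k, A.grading k = ⨆ n, w k n
  d_mem : ∀ {k : ℕ} {n : ℤ} {x : A.carrier}, x ∈ w k n → A.d x ∈ w (k + 1) n
  mul_mem : ∀ {k l : ℕ} {n m : ℤ} {x y : A.carrier},
      x ∈ w k n → y ∈ w l m → x * y ∈ w (k + l) (n + m)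

namespace Weight

/-- The weight-`n` part of `A`. An element of `piece n` (nonzero) is `ω`-homogeneous
of weight `n`. -/
def piece {A : ConnectedDGA} (W : Weight A) (n : ℤ) : Submodule ℚ A.carrier := ⨆ k, W.w k n

/-- A weight is positive if the negative pieces vanish and the weight `0` piece is `A^0`. -/
def Positive {A : ConnectedDGA} (W : Weight A) : Prop :=
  (∀ n : ℤ, n < 0 → W.piece n = ⊥) ∧ W.piece 0 = A.grading 0

end Weight

/-- A dga morphism: degree-preserving algebra homomorphism commuting with differentials. -/
structure Hom (A B : ConnectedDGA) where
  toFun : A.carrier →ₐ[ℚ] B.carrier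
  map_grading : ∀ {k : ℕ} {x : A.carrier}, x ∈ A.grading k → toFun x ∈ B.grading k
  map_d : ∀ x, B.d (toFun x) = toFun (A.d x)

/-- `ν` is a representative of the fundamental class of a dga whose cohomology is a
Poincaré duality algebra of formal dimension `N`. -/
structure PoincareDuality (A : ConnectedDGA) (N : ℕ) (ν : A.carrier) : Prop where
  mem : ν ∈ A.grading N
  cocycle : A.d ν = 0
  not_bdry : ¬ A.IsCoboundary ν
  top_vanish : ∀ k : ℕ, N < k → ∀ x ∈ A.grading k, A.d x = 0 → A.IsCoboundary x
  top_span : ∀ x ∈ A.grading N, A.d x = 0 → ∃ q : ℚ, A.IsCoboundary (x - q • ν)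
  nondeg : ∀ k : ℕ, k ≤ N → ∀ x ∈ A.grading k, A.d x = 0 → ¬ A.IsCoboundary x →
      ∃ y ∈ A.grading (N - k), A.d y = 0 ∧ ¬ A.IsCoboundary (x * y)

section Aux

variable (A : ConnectedDGA) (W : Weight A)

/-- The scaling linear map: multiply the weight-`n` part by `t ^ n`. -/
noncomputable def scaleMap (t : ℚ) : A.carrier →ₗ[ℚ] A.carrier :=
  (DirectSum.toModule ℚ (ℕ × ℤ) A.carrier
      (fun p => (t ^ p.2 : ℚ) • (W.w p.1 p.2).subtype)) ∘ₗ
    (LinearEquiv.ofBijective (DirectSum.coeLinearMap fun p : ℕ × ℤ => W.w p.1 p.2)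
      W.internal).symm.toLinearMap

theorem scaleMap_piece (t : ℚ) {k : ℕ} {n : ℤ} {x : A.carrier} (hx : x ∈ W.w k n) :
    scaleMap A W t x = t ^ n • x := by
  have h1 : (LinearEquiv.ofBijective (DirectSum.coeLinearMap fun p : ℕ × ℤ => W.w p.1 p.2)
      W.internal).symm x = DirectSum.of (fun p : ℕ × ℤ => W.w p.1 p.2) (k, n) ⟨x, hx⟩ := by
    apply (LinearEquiv.ofBijective (DirectSum.coeLinearMap fun p : ℕ × ℤ => W.w p.1 p.2) W.internal).injective
    simp [DirectSum.coeLinearMap_of]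
    exact (DirectSum.coeLinearMap_of (fun p : ℕ × ℤ => W.w p.1 p.2) (k, n) ⟨x, hx⟩).symm
  have h2 : DirectSum.of (fun p : ℕ × ℤ => W.w p.1 p.2) (k, n) ⟨x, hx⟩ =
      DirectSum.lof ℚ (ℕ × ℤ) (fun p : ℕ × ℤ => W.w p.1 p.2) (k, n) ⟨x, hx⟩ :=
    (DirectSum.lof_eq_of ℚ _ _ _ _).symm
  simp only [scaleMap, LinearMap.coe_comp, Function.comp_apply, LinearEquiv.coe_coe, h1, h2,
    DirectSum.toModule_lof]
  simp

theorem scaleMap_eq_of_mem_iSup (t : ℚ) {S : Set (ℕ × ℤ)}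
    {x : A.carrier} (hx : x ∈ ⨆ p ∈ S, W.w p.1 p.2)
    (g : A.carrier →ₗ[ℚ] A.carrier)
    (hg : ∀ p ∈ S, ∀ y ∈ W.w p.1 p.2, scaleMap A W t y = g y) :
    scaleMap A W t x = g x := by
  have : (⨆ p ∈ S, W.w p.1 p.2) ≤ LinearMap.eqLocus (scaleMap A W t) g := by
    refine iSup_le fun p => iSup_le fun hp => fun y hy => hg p hp y hy
  exact this hx

theorem top_eq_iSup : (⊤ : Submodule ℚ A.carrier) = ⨆ p : ℕ × ℤ, W.w p.1 p.2 :=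
  (W.internal.submodule_iSup_eq_top).symm

theorem one_mem_w00 (h1 : (1 : A.carrier) ≠ 0) : (1 : A.carrier) ∈ W.w 0 0 := by
  have hgr : (1 : A.carrier) ∈ ⨆ n, W.w 0 n := by
    rw [← W.grading_eq]; exact A.one_mem
  -- first find some n with 1 ∈ W.w 0 n
  have hex : ∃ n : ℤ, (1 : A.carrier) ∈ W.w 0 n := by
    have key : ∀ x ∈ (⨆ n, W.w 0 n), x = 0 ∨ ∃ n : ℤ, (1 : A.carrier) ∈ W.w 0 n := by
      intro x hx
      refine Submodule.iSup_induction (motive := fun x => x = 0 ∨ ∃ n : ℤ,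
        (1 : A.carrier) ∈ W.w 0 n) (fun n => W.w 0 n) hx ?_ (Or.inl rfl) ?_
      · intro n y hy
        have hy0 : y ∈ A.grading 0 := by
          rw [W.grading_eq]; exact Submodule.mem_iSup_of_mem n hy
        obtain ⟨q, hq⟩ := A.connected y hy0
        rcases eq_or_ne q 0 with h | h
        · exact Or.inl (by simp [hq, h])
        · refine Or.inr ⟨n, ?_⟩
          have : (q⁻¹ : ℚ) • y ∈ W.w 0 n := Submodule.smul_mem _ _ hy
          rwa [hq, smul_smul, inv_mul_cancel₀ h, one_smul] at this
      · rintro x y (hx | hx) (hy | hy)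
        · exact Or.inl (by simp [hx, hy])
        all_goals first | exact Or.inr hy | exact Or.inr hx
    rcases key 1 hgr with h | h
    · exact absurd h h1
    · exact h
  obtain ⟨n, hn⟩ := hex
  rcases eq_or_ne n 0 with rfl | hn0
  · exact hn
  · exfalso
    have h2 : (1 : A.carrier) ∈ W.w 0 (n + n) := by
      have := W.mul_mem hn hn
      simpa using this
    have hdisj : Disjoint (W.w 0 n) (W.w 0 (n + n)) := by
      have hne2 : ((0, n) : ℕ × ℤ) ≠ ((0, n + n) : ℕ × ℤ) := by
        simp only [ne_eq, Prod.mk.injEq, not_and]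
        intro _
        omega
      exact (W.internal.submodule_iSupIndep).pairwiseDisjoint hne2
    exact h1 (Submodule.disjoint_def.mp hdisj 1 hn h2)

theorem scaleMap_mul (t : ℚ) (ht : t ≠ 0) (x y : A.carrier) :
    scaleMap A W t (x * y) = scaleMap A W t x * scaleMap A W t y := by
  have key : ∀ p : ℕ × ℤ, ∀ x ∈ W.w p.1 p.2, ∀ q : ℕ × ℤ, ∀ y ∈ W.w q.1 q.2,
      scaleMap A W t (x * y) = scaleMap A W t x * scaleMap A W t y := by
    rintro ⟨k, n⟩ x hx ⟨l, m⟩ y hy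
    rw [scaleMap_piece A W t hx, scaleMap_piece A W t hy,
      scaleMap_piece A W t (W.mul_mem hx hy)]
    rw [smul_mul_assoc, mul_smul_comm, smul_smul, ← zpow_add₀ ht]
  -- bilinear extension
  set f := scaleMap A W t
  let B₁ : A.carrier →ₗ[ℚ] A.carrier →ₗ[ℚ] A.carrier := (LinearMap.mul ℚ A.carrier).compr₂ f
  let B₂ : A.carrier →ₗ[ℚ] A.carrier →ₗ[ℚ] A.carrier :=
    ((LinearMap.mul ℚ A.carrier).compl₁₂ f f)
  have hB : B₁ = B₂ := by
    have h1 : (⊤ : Submodule ℚ A.carrier) ≤ LinearMap.eqLocus B₁ B₂ := by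
      rw [top_eq_iSup A W]
      refine iSup_le fun p => fun x hx => ?_
      have h2 : (⊤ : Submodule ℚ A.carrier) ≤ LinearMap.eqLocus (B₁ x) (B₂ x) := by
        rw [top_eq_iSup A W]
        refine iSup_le fun q => fun y hy => ?_
        simpa [B₁, B₂, f] using key p x hx q y hy
      exact LinearMap.ext fun y => h2 (Submodule.mem_top (x := y))
    exact LinearMap.ext fun x => LinearMap.ext fun y =>
      congrFun (congrArg _ (h1 (Submodule.mem_top (x := x)))) y
  have := congrFun (congrArg DFunLike.coe (congrFun (congrArg DFunLike.coe hB) x)) y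
  simpa [B₁, B₂, f] using this

theorem scaleMap_d (t : ℚ) (x : A.carrier) :
    A.d (scaleMap A W t x) = scaleMap A W t (A.d x) := by
  have h1 : (⊤ : Submodule ℚ A.carrier) ≤
      LinearMap.eqLocus (A.d ∘ₗ scaleMap A W t) (scaleMap A W t ∘ₗ A.d) := by
    rw [top_eq_iSup A W]
    refine iSup_le fun p => fun y hy => ?_
    show A.d (scaleMap A W t y) = scaleMap A W t (A.d y)
    rw [scaleMap_piece A W t hy, scaleMap_piece A W t (W.d_mem hy), map_smul]
  exact h1 (Submodule.mem_top (x := x))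

theorem scaleMap_grading (t : ℚ) {k : ℕ} {x : A.carrier} (hx : x ∈ A.grading k) :
    scaleMap A W t x ∈ A.grading k := by
  rw [W.grading_eq] at hx ⊢
  have h1 : (⨆ n, W.w k n) ≤ Submodule.comap (scaleMap A W t) (⨆ n, W.w k n) := by
    refine iSup_le fun n => fun y hy => ?_
    have : scaleMap A W t y = t ^ n • y := scaleMap_piece A W t hy
    simp only [Submodule.mem_comap, this]
    exact Submodule.mem_iSup_of_mem n (Submodule.smul_mem _ _ hy)
  exact h1 hx

theorem scaleMap_weight (t : ℚ) {n : ℤ} {x : A.carrier} (hx : x ∈ W.piece n) :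
    scaleMap A W t x = t ^ n • x := by
  have h1 : W.piece n ≤ LinearMap.eqLocus (scaleMap A W t) ((t ^ n : ℚ) • LinearMap.id) := by
    refine iSup_le fun k => fun y hy => ?_
    show scaleMap A W t y = t ^ n • y
    exact scaleMap_piece A W t hy
  exact h1 hx

end Aux

/-- if a weight `ω` on a connected dga detects a cocycle `a` (i.e. `a ≠ 0` is
`ω`-homogeneous of nonzero weight) then the class `[a]` is flexible: for every `n ∈ ℤ` there
is a dga endomorphism `f` with `H(f)([a]) = λ[a]` for some rational `λ ≥ n`. -/
theorem detected_class_is_flexible (A : ConnectedDGA) (W : Weight A) (a : A.carrier)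
    (hcocycle : A.d a = 0) (hne : a ≠ 0) (n₀ : ℤ) (hn₀ : n₀ ≠ 0) (hmem : a ∈ W.piece n₀) :
    ∀ n : ℤ, ∃ (f : Hom A A) (lam : ℚ), (n : ℚ) ≤ lam ∧
      A.IsCoboundary (f.toFun a - lam • a) := by
  intro n
  have h1 : (1 : A.carrier) ≠ 0 := by
    intro h
    apply hne
    calc a = a * 1 := (mul_one a).symm
    _ = 0 := by rw [h, mul_zero]
  -- choose the scaling parameter
  set M : ℚ := max (n : ℚ) 1 with hM
  have hM1 : 1 ≤ M := le_max_right _ _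
  have hMn : (n : ℚ) ≤ M := le_max_left _ _
  have hM0 : 0 < M := lt_of_lt_of_le one_pos hM1
  set t : ℚ := if 0 < n₀ then M else M⁻¹ with hT
  have ht : t ≠ 0 := by
    rw [hT]
    split_ifs
    · exact ne_of_gt hM0
    · exact inv_ne_zero (ne_of_gt hM0)
  have hlam : (n : ℚ) ≤ t ^ n₀ := by
    have hMab : M ^ |n₀| = t ^ n₀ := by
      rcases lt_or_ge 0 n₀ with h | h
      · rw [abs_of_pos h]; simp [hT, h]
      · have hlt : n₀ < 0 := lt_of_le_of_ne h hn₀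
        rw [abs_of_neg hlt]
        simp only [hT, if_neg (not_lt.mpr h)]
        rw [inv_zpow, ← zpow_neg]
    have h1le : (1 : ℤ) ≤ |n₀| := by
      rcases lt_or_ge 0 n₀ with h | h
      · rw [abs_of_pos h]; omega
      · rw [abs_of_neg (lt_of_le_of_ne h hn₀)]; omega
    calc (n : ℚ) ≤ M := hMn
    _ = M ^ (1 : ℤ) := (zpow_one M).symm
    _ ≤ M ^ |n₀| := by
        exact zpow_le_zpow_right₀ hM1 h1le
    _ = t ^ n₀ := hMab
  have h00 : (1 : A.carrier) ∈ W.w 0 0 := one_mem_w00 A W h1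
  -- build the algebra hom
  let φ : A.carrier →ₐ[ℚ] A.carrier := AlgHom.ofLinearMap (scaleMap A W t)
    (by rw [scaleMap_piece A W t h00]; simp)
    (scaleMap_mul A W t ht)
  refine ⟨⟨φ, fun {k} {x} hx => scaleMap_grading A W t hx,
      fun x => scaleMap_d A W t x⟩, t ^ n₀, hlam, ?_⟩
  have : φ a = t ^ n₀ • a := scaleMap_weight A W t hmem
  refine ⟨0, ?_⟩
  rw [map_zero]
  simp [this]
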